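/- Let α, β > 0 with β > α, n ∈ ℕ, and φ(t) = e^{-t^{-α}} sin(t^{-β}) on (0,1]. Then the n-th derivative has the form φ^{(n)}(t) = e^{-t^{-α}} ( P(t^{-1}) sin(t^{-β}) + Q(t^{-1}) cos(t^{-β}) ), where P and Q are finite linear combinations of real powers of their argument, and the maximum of the top exponents of P and Q equals n(β+1). -/

import Mathlib

open Set Real

private lemma shift_sum (s s' : Finset ℝ) (δ : ℝ) (hsub : Finset.image (· + δ) s ⊆ s')
    (e : ℝ → ℝ) (he : ∀ γ, γ ∉ s → e γ = 0) (t : ℝ) (ht : 0 < t) :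
    ∑ γ ∈ s', e (γ - δ) * t ^ (-γ) = (∑ γ ∈ s, e γ * t ^ (-γ)) * t ^ (-δ) := by
  rw [← Finset.sum_subset hsub (fun γ _ hγ => ?_)]
  · rw [Finset.sum_image (fun a _ b _ h => by simpa using h), Finset.sum_mul]
    refine Finset.sum_congr rfl fun γ _ => ?_
    have h1 : (-(γ + δ)) = (-γ) + (-δ) := by ring
    rw [add_sub_cancel_right, h1, Real.rpow_add ht]
    ring
  · have h2 : γ - δ ∉ s := fun h => hγ (Finset.mem_image.mpr ⟨γ - δ, h, by ring⟩)
    rw [he _ h2, zero_mul]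

private lemma osc_helper (α β : ℝ) (hα : 0 < α) (hβ : α < β) (φ : ℝ → ℝ)
    (hφ : ∀ t, φ t = Real.exp (-(t ^ (-α))) * Real.sin (t ^ (-β))) (n : ℕ) :
    ∃ (s : Finset ℝ) (c d : ℝ → ℝ),
      (∀ γ, γ ∉ s → c γ = 0 ∧ d γ = 0) ∧
      (∀ t ∈ Set.Ioi (0:ℝ),
        iteratedDeriv n φ t =
          Real.exp (-(t ^ (-α))) *
            ((∑ γ ∈ s, c γ * t ^ (-γ)) * Real.sin (t ^ (-β)) +
             (∑ γ ∈ s, d γ * t ^ (-γ)) * Real.cos (t ^ (-β)))) ∧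
      (n * (β + 1) : ℝ) ∈ s ∧
      (c (n * (β + 1)) ≠ 0 ∨ d (n * (β + 1)) ≠ 0) ∧
      (∀ γ : ℝ, (c γ ≠ 0 ∨ d γ ≠ 0) → γ ≤ n * (β + 1)) := by
  induction n with
  | zero =>
    refine ⟨{0}, fun γ => if γ = 0 then 1 else 0, fun _ => 0, ?_, ?_, ?_, ?_, ?_⟩
    · intro γ hγ
      simp only [Finset.mem_singleton] at hγ
      simp [hγ]
    · intro t ht
      rw [iteratedDeriv_zero, hφ]
      simp
    · simp
    · simp
    · intro γ hγ
      rcases hγ with h | h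
      · by_contra hle
        push_neg at hle
        have : γ ≠ 0 := by
          intro h0; rw [h0] at hle; simp at hle
        simp [this] at h
      · simp at h
  | succ n ih =>
    obtain ⟨s, c, d, hsupp, hident, hmem, hne, htop⟩ := ih
    show ∃ (s' : Finset ℝ) (c' d' : ℝ → ℝ),
      (∀ γ, γ ∉ s' → c' γ = 0 ∧ d' γ = 0) ∧
      (∀ t ∈ Set.Ioi (0:ℝ),
        iteratedDeriv (n+1) φ t =
          Real.exp (-(t ^ (-α))) *
            ((∑ γ ∈ s', c' γ * t ^ (-γ)) * Real.sin (t ^ (-β)) +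
             (∑ γ ∈ s', d' γ * t ^ (-γ)) * Real.cos (t ^ (-β)))) ∧
      ((n+1 : ℕ) * (β + 1) : ℝ) ∈ s' ∧
      (c' ((n+1:ℕ) * (β + 1)) ≠ 0 ∨ d' ((n+1:ℕ) * (β + 1)) ≠ 0) ∧
      (∀ γ : ℝ, (c' γ ≠ 0 ∨ d' γ ≠ 0) → γ ≤ (n+1:ℕ) * (β + 1))
    classical
    have hβ0 : (0:ℝ) < β := hα.trans hβ
    set D : ℝ := n * (β + 1) with hD
    have hzero : ∀ γ : ℝ, D < γ → c γ = 0 ∧ d γ = 0 := by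
      intro γ hγ
      constructor
      · by_contra h; exact absurd (htop γ (Or.inl h)) (not_le.mpr hγ)
      · by_contra h; exact absurd (htop γ (Or.inr h)) (not_le.mpr hγ)
    set s' : Finset ℝ :=
      Finset.image (· + (α+1)) s ∪ Finset.image (· + 1) s ∪ Finset.image (· + (β+1)) s with hs'
    set c' : ℝ → ℝ := fun γ =>
      α * c (γ - (α+1)) + (1 - γ) * c (γ - 1) + β * d (γ - (β+1)) with hc'
    set d' : ℝ → ℝ := fun γ =>
      α * d (γ - (α+1)) + (1 - γ) * d (γ - 1) - β * c (γ - (β+1)) with hd'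
    have hsubA : Finset.image (· + (α+1)) s ⊆ s' := by
      intro x hx; simp only [hs', Finset.mem_union]; tauto
    have hsubB : Finset.image (· + 1) s ⊆ s' := by
      intro x hx; simp only [hs', Finset.mem_union]; tauto
    have hsubC : Finset.image (· + (β+1)) s ⊆ s' := by
      intro x hx; simp only [hs', Finset.mem_union]; tauto
    have hDsucc : ((n+1:ℕ) * (β + 1) : ℝ) = D + (β + 1) := by
      push_cast [hD]; ring
    refine ⟨s', c', d', ?_, ?_, ?_, ?_, ?_⟩
    · intro γ hγ
      have hA : γ - (α+1) ∉ s := fun h => hγ (hsubA (Finset.mem_image.mpr ⟨_, h, by ring⟩))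
      have hB : γ - 1 ∉ s := fun h => hγ (hsubB (Finset.mem_image.mpr ⟨_, h, by ring⟩))
      have hC : γ - (β+1) ∉ s := fun h => hγ (hsubC (Finset.mem_image.mpr ⟨_, h, by ring⟩))
      constructor
      · simp only [hc']
        rw [(hsupp _ hA).1, (hsupp _ hB).1, (hsupp _ hC).2]; ring
      · simp only [hd']
        rw [(hsupp _ hA).2, (hsupp _ hB).2, (hsupp _ hC).1]; ring
    · -- the analytic identity
      intro t ht
      have ht' : (0:ℝ) < t := ht
      have htne : t ≠ 0 := ne_of_gt ht'
      set g : ℝ → ℝ := fun t =>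
        Real.exp (-(t ^ (-α))) *
          ((∑ γ ∈ s, c γ * t ^ (-γ)) * Real.sin (t ^ (-β)) +
           (∑ γ ∈ s, d γ * t ^ (-γ)) * Real.cos (t ^ (-β))) with hg
      have hEq : iteratedDeriv n φ =ᶠ[nhds t] g :=
        Filter.eventually_of_mem (isOpen_Ioi.mem_nhds ht) (fun x hx => hident x hx)
      have hpow : ∀ γ : ℝ, HasDerivAt (fun u : ℝ => u ^ (-γ)) (-γ * t ^ (-γ - 1)) t :=
        fun γ => Real.hasDerivAt_rpow_const (Or.inl htne)
      have hS : HasDerivAt (fun u : ℝ => ∑ γ ∈ s, c γ * u ^ (-γ))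
          (∑ γ ∈ s, c γ * (-γ * t ^ (-γ - 1))) t :=
        HasDerivAt.fun_sum fun γ _ => (hpow γ).const_mul (c γ)
      have hC2 : HasDerivAt (fun u : ℝ => ∑ γ ∈ s, d γ * u ^ (-γ))
          (∑ γ ∈ s, d γ * (-γ * t ^ (-γ - 1))) t :=
        HasDerivAt.fun_sum fun γ _ => (hpow γ).const_mul (d γ)
      have hexp : HasDerivAt (fun u : ℝ => Real.exp (-(u ^ (-α))))
          (Real.exp (-(t ^ (-α))) * (-(-α * t ^ (-α - 1)))) t := ((hpow α).neg).exp
      have hsin : HasDerivAt (fun u : ℝ => Real.sin (u ^ (-β)))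
          (Real.cos (t ^ (-β)) * (-β * t ^ (-β - 1))) t := (hpow β).sin
      have hcos : HasDerivAt (fun u : ℝ => Real.cos (u ^ (-β)))
          (-Real.sin (t ^ (-β)) * (-β * t ^ (-β - 1))) t := (hpow β).cos
      have hg' : HasDerivAt g
          ((Real.exp (-(t ^ (-α))) * (-(-α * t ^ (-α - 1)))) *
            ((∑ γ ∈ s, c γ * t ^ (-γ)) * Real.sin (t ^ (-β)) +
             (∑ γ ∈ s, d γ * t ^ (-γ)) * Real.cos (t ^ (-β))) +
           Real.exp (-(t ^ (-α))) *
            (((∑ γ ∈ s, c γ * (-γ * t ^ (-γ - 1))) * Real.sin (t ^ (-β)) +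
              (∑ γ ∈ s, c γ * t ^ (-γ)) * (Real.cos (t ^ (-β)) * (-β * t ^ (-β - 1)))) +
             ((∑ γ ∈ s, d γ * (-γ * t ^ (-γ - 1))) * Real.cos (t ^ (-β)) +
              (∑ γ ∈ s, d γ * t ^ (-γ)) * (-Real.sin (t ^ (-β)) * (-β * t ^ (-β - 1)))))) t :=
        hexp.mul ((hS.mul hsin).add (hC2.mul hcos))
      have hstep : iteratedDeriv (n+1) φ t = deriv g t := by
        rw [iteratedDeriv_succ, hEq.deriv_eq]
      rw [hstep, hg'.deriv]
      -- sum manipulation facts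
      have e1 := shift_sum s s' (α+1) hsubA (fun x => α * c x)
        (fun γ h => by simp [(hsupp γ h).1]) t ht'
      have e2 := shift_sum s s' 1 hsubB (fun x => -x * c x)
        (fun γ h => by simp [(hsupp γ h).1]) t ht'
      have e3 := shift_sum s s' (β+1) hsubC (fun x => β * d x)
        (fun γ h => by simp [(hsupp γ h).2]) t ht'
      have f1 := shift_sum s s' (α+1) hsubA (fun x => α * d x)
        (fun γ h => by simp [(hsupp γ h).2]) t ht'
      have f2 := shift_sum s s' 1 hsubB (fun x => -x * d x)
        (fun γ h => by simp [(hsupp γ h).2]) t ht'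
      have f3 := shift_sum s s' (β+1) hsubC (fun x => -β * c x)
        (fun γ h => by simp [(hsupp γ h).1]) t ht'
      have hmulc : ∀ (k : ℝ) (e : ℝ → ℝ),
          ∑ γ ∈ s, k * e γ * t ^ (-γ) = k * ∑ γ ∈ s, e γ * t ^ (-γ) := by
        intro k e
        rw [Finset.mul_sum]
        exact Finset.sum_congr rfl fun γ _ => by ring
      have hc'sum : ∑ γ ∈ s', c' γ * t ^ (-γ) =
          α * (∑ γ ∈ s, c γ * t ^ (-γ)) * t ^ (-(α+1)) +
          (∑ γ ∈ s, -γ * c γ * t ^ (-γ)) * t ^ (-(1:ℝ)) +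
          β * (∑ γ ∈ s, d γ * t ^ (-γ)) * t ^ (-(β+1)) := by
        calc ∑ γ ∈ s', c' γ * t ^ (-γ)
            = ∑ γ ∈ s', (α * c (γ - (α+1)) * t ^ (-γ) +
                -(γ - 1) * c (γ - 1) * t ^ (-γ) +
                β * d (γ - (β+1)) * t ^ (-γ)) := by
              refine Finset.sum_congr rfl fun γ _ => ?_
              simp only [hc']; ring
          _ = _ := by
              rw [Finset.sum_add_distrib, Finset.sum_add_distrib, e1, e2, e3,
                hmulc α c, hmulc β d]
      have hd'sum : ∑ γ ∈ s', d' γ * t ^ (-γ) =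
          α * (∑ γ ∈ s, d γ * t ^ (-γ)) * t ^ (-(α+1)) +
          (∑ γ ∈ s, -γ * d γ * t ^ (-γ)) * t ^ (-(1:ℝ)) +
          -β * (∑ γ ∈ s, c γ * t ^ (-γ)) * t ^ (-(β+1)) := by
        calc ∑ γ ∈ s', d' γ * t ^ (-γ)
            = ∑ γ ∈ s', (α * d (γ - (α+1)) * t ^ (-γ) +
                -(γ - 1) * d (γ - 1) * t ^ (-γ) +
                -β * c (γ - (β+1)) * t ^ (-γ)) := by
              refine Finset.sum_congr rfl fun γ _ => ?_
              simp only [hd']; ring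
          _ = _ := by
              rw [Finset.sum_add_distrib, Finset.sum_add_distrib, f1, f2, f3,
                hmulc α d, hmulc (-β) c]
      have hder : ∀ e : ℝ → ℝ, ∑ γ ∈ s, e γ * (-γ * t ^ (-γ - 1)) =
          (∑ γ ∈ s, -γ * e γ * t ^ (-γ)) * t ^ (-(1:ℝ)) := by
        intro e
        rw [Finset.sum_mul]
        refine Finset.sum_congr rfl fun γ _ => ?_
        rw [show (-γ - 1 : ℝ) = -γ + -1 by ring, Real.rpow_add ht']
        ring
      rw [hc'sum, hd'sum, hder c, hder d,
        show (-α - 1 : ℝ) = -(α+1) + 0 by ring, show (-β - 1 : ℝ) = -(β+1) + 0 by ring,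
        Real.rpow_add ht', Real.rpow_add ht', Real.rpow_zero]
      ring
    · rw [hDsucc]; exact hsubC (Finset.mem_image.mpr ⟨D, hmem, rfl⟩)
    · -- top coefficient nonzero
      have h1 := hzero (D + (β+1) - (α+1)) (by simp only [hD]; linarith)
      have h2 := hzero (D + (β+1) - 1) (by simp only [hD]; linarith)
      have h3 : D + (β+1) - (β+1) = D := by ring
      have hc'val : c' (D + (β+1)) = β * d D := by
        simp only [hc']; rw [h1.1, h2.1, h3]; ring
      have hd'val : d' (D + (β+1)) = -(β * c D) := by
        simp only [hd']; rw [h1.2, h2.2, h3]; ring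
      rw [hDsucc]
      rcases hne with h | h
      · right; rw [hd'val]
        intro h0
        rcases mul_eq_zero.mp (neg_eq_zero.mp h0) with h' | h'
        · exact absurd h' hβ0.ne'
        · exact h h'
      · left; rw [hc'val]
        intro h0
        rcases mul_eq_zero.mp h0 with h' | h'
        · exact absurd h' hβ0.ne'
        · exact h h'
    · intro γ hγ
      rw [hDsucc]
      by_contra hle
      push_neg at hle
      have hA := hzero (γ - (α+1)) (by linarith)
      have hB := hzero (γ - 1) (by linarith)
      have hC := hzero (γ - (β+1)) (by linarith)
      rcases hγ with h | h
      · exact h (by simp only [hc']; rw [hA.1, hB.1, hC.2]; ring)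
      · exact h (by simp only [hd']; rw [hA.2, hB.2, hC.1]; ring)

/-- for `β > α > 0` and `φ(t) = e^{-t^{-α}} sin(t^{-β})`, the `n`-th derivative
has the form `φ^{(n)}(t) = e^{-t^{-α}} (P(t⁻¹) sin(t^{-β}) + Q(t⁻¹) cos(t^{-β}))` on `(0,1]`,
where `P, Q` are finite linear combinations of real powers, and the maximal exponent appearing
(with a nonzero coefficient) in `P` or `Q` equals `n(β+1)`. -/
theorem oscillating_derivative_form (α β : ℝ) (hα : 0 < α) (hβ : α < β) (n : ℕ)
    (φ : ℝ → ℝ) (hφ : ∀ t, φ t = Real.exp (-(t ^ (-α))) * Real.sin (t ^ (-β))) :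
    ∃ (s : Finset ℝ) (c d : ℝ → ℝ),
      (∀ t ∈ Set.Ioc (0:ℝ) 1,
        iteratedDeriv n φ t =
          Real.exp (-(t ^ (-α))) *
            ((∑ γ ∈ s, c γ * (t⁻¹) ^ γ) * Real.sin (t ^ (-β)) +
             (∑ γ ∈ s, d γ * (t⁻¹) ^ γ) * Real.cos (t ^ (-β)))) ∧
      (n * (β + 1) : ℝ) ∈ s ∧
      (c (n * (β + 1)) ≠ 0 ∨ d (n * (β + 1)) ≠ 0) ∧
      (∀ γ ∈ s, (c γ ≠ 0 ∨ d γ ≠ 0) → γ ≤ n * (β + 1)) := by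
  obtain ⟨s, c, d, hsupp, hident, hmem, hne, htop⟩ := osc_helper α β hα hβ φ hφ n
  refine ⟨s, c, d, ?_, hmem, hne, fun γ _ h => htop γ h⟩
  intro t ht
  have ht0 : (0:ℝ) < t := ht.1
  rw [hident t (Set.mem_Ioi.mpr ht0)]
  have hconv : ∀ e : ℝ → ℝ, (∑ γ ∈ s, e γ * (t⁻¹) ^ γ) = ∑ γ ∈ s, e γ * t ^ (-γ) := by
    intro e
    refine Finset.sum_congr rfl fun γ _ => ?_
    rw [Real.inv_rpow ht0.le, Real.rpow_neg ht0.le]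
  rw [hconv c, hconv d]
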